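/- For every k ≥ 4, the weighted directed graph G_w(ℓ) has a k-spanner of cost 0 if and only if the strings a and b are disjoint. -/

import Mathlib

namespace SpannerW

/-- Vertices of the weighted directed graph `G_w(ℓ)`. -/
inductive V : Type
  | x1 : ℕ → V
  | x2 : ℕ → V
  | y1 : ℕ → V
  | y2 : ℕ → V
  | xx : ℕ → V
  | yy : ℕ → V
  deriving DecidableEq

/-- The directed edges of `G_w(ℓ)` (with input strings `a`, `b`, where
`a i j = true` means `a_{ij} = 1`). -/
def Edge (ℓ : ℕ) (a b : ℕ → ℕ → Bool) : V → V → Prop := fun u w =>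
  (∃ i, 1 ≤ i ∧ i ≤ ℓ ∧ u = V.x1 i ∧ w = V.y1 i) ∨
  (∃ i, 1 ≤ i ∧ i ≤ ℓ ∧ u = V.x2 i ∧ w = V.y2 i) ∨
  (∃ i, 1 ≤ i ∧ i ≤ ℓ ∧ u = V.xx i ∧ w = V.x1 i) ∨
  (∃ i, 1 ≤ i ∧ i ≤ ℓ ∧ u = V.y2 i ∧ w = V.yy i) ∨
  (∃ i j, 1 ≤ i ∧ i ≤ ℓ ∧ 1 ≤ j ∧ j ≤ ℓ ∧ u = V.xx i ∧ w = V.yy j) ∨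
  (∃ i j, 1 ≤ i ∧ i ≤ ℓ ∧ 1 ≤ j ∧ j ≤ ℓ ∧ a i j = false ∧ u = V.x1 i ∧ w = V.x2 j) ∨
  (∃ i j, 1 ≤ i ∧ i ≤ ℓ ∧ 1 ≤ j ∧ j ≤ ℓ ∧ b i j = false ∧ u = V.y1 i ∧ w = V.y2 j)

/-- Membership in the complete bipartite part `D` of `G_w(ℓ)`. -/
def InD (ℓ : ℕ) : V → V → Prop := fun u w =>
  ∃ i j, 1 ≤ i ∧ i ≤ ℓ ∧ 1 ≤ j ∧ j ≤ ℓ ∧ u = V.xx i ∧ w = V.yy j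

open scoped Classical in
/-- The weight of an edge of `G_w(ℓ)`: 1 on edges of `D`, 0 elsewhere. -/
noncomputable def weight (ℓ : ℕ) (u w : V) : ℕ := if InD ℓ u w then 1 else 0

/-- The cost of a set of edges: the sum of the weights of its edges. -/
noncomputable def cost (ℓ : ℕ) (H : Set (V × V)) : ℕ := ∑ᶠ p ∈ H, weight ℓ p.1 p.2

/-- A directed walk of a given length with all edges satisfying `E`. -/
inductive Walk (E : V → V → Prop) : V → V → ℕ → Prop
  | nil (v : V) : Walk E v v 0
  | cons {u v w : V} {n : ℕ} : E u v → Walk E v w n → Walk E u w (n + 1)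

/-- `H` is a `k`-spanner of `G_w(ℓ)`. -/
def IsSpanner (ℓ k : ℕ) (a b : ℕ → ℕ → Bool) (H : Set (V × V)) : Prop :=
  (∀ p ∈ H, Edge ℓ a b p.1 p.2) ∧
  (∀ u w, Edge ℓ a b u w → ∃ n, n ≤ k ∧ Walk (fun x y => (x, y) ∈ H) u w n)


section Aux

variable {ℓ : ℕ} {a b : ℕ → ℕ → Bool}

lemma weight_of_not_inD {u w : V} (h : ¬ InD ℓ u w) : weight ℓ u w = 0 := by
  simp [weight, h]

lemma support_weight_finite :
    (Function.support fun p : V × V => weight ℓ p.1 p.2).Finite := by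
  apply Set.Finite.subset (((Set.finite_Icc 1 ℓ).prod (Set.finite_Icc 1 ℓ)).image
    (fun q : ℕ × ℕ => (V.xx q.1, V.yy q.2)))
  intro p hp
  have hD : InD ℓ p.1 p.2 := by
    by_contra h
    exact hp (weight_of_not_inD h)
  obtain ⟨i, j, hi1, hi2, hj1, hj2, h1, h2⟩ := hD
  exact ⟨(i, j), ⟨⟨hi1, hi2⟩, ⟨hj1, hj2⟩⟩, by simp [← h1, ← h2]⟩

lemma weight_eq_zero_of_cost_zero {H : Set (V × V)} (h : cost ℓ H = 0)
    {p : V × V} (hp : p ∈ H) : weight ℓ p.1 p.2 = 0 := by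
  by_contra hw
  have hfin : (H ∩ Function.support fun p : V × V => weight ℓ p.1 p.2).Finite :=
    support_weight_finite.subset Set.inter_subset_right
  have hsum := finsum_mem_eq_sum (fun p : V × V => weight ℓ p.1 p.2) hfin
  rw [cost, hsum] at h
  have hpf : p ∈ hfin.toFinset := by
    rw [Set.Finite.mem_toFinset]
    exact ⟨hp, hw⟩
  exact hw ((Finset.sum_eq_zero_iff.mp h) p hpf)

lemma step_xx {i : ℕ} {v : V} (hE : Edge ℓ a b (V.xx i) v)
    (hD : ¬ InD ℓ (V.xx i) v) : v = V.x1 i := by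
  rcases hE with ⟨i', _, _, h1, h2⟩ | ⟨i', _, _, h1, h2⟩ | ⟨i', _, _, h1, h2⟩ |
    ⟨i', _, _, h1, h2⟩ | ⟨i', j', hi1, hi2, hj1, hj2, h1, h2⟩ |
    ⟨i', j', _, _, _, _, _, h1, h2⟩ | ⟨i', j', _, _, _, _, _, h1, h2⟩ <;>
    first
      | (exact V.noConfusion h1)
      | (injection h1 with h; subst h; exact h2)
      | (exact absurd ⟨i', j', hi1, hi2, hj1, hj2, h1, h2⟩ hD)

lemma step_x1 {i : ℕ} {v : V} (hE : Edge ℓ a b (V.x1 i) v) :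
    v = V.y1 i ∨ ∃ m, 1 ≤ m ∧ m ≤ ℓ ∧ a i m = false ∧ v = V.x2 m := by
  rcases hE with ⟨i', _, _, h1, h2⟩ | ⟨i', _, _, h1, h2⟩ | ⟨i', _, _, h1, h2⟩ |
    ⟨i', _, _, h1, h2⟩ | ⟨i', j', _, _, _, _, h1, h2⟩ |
    ⟨i', j', _, _, hj1, hj2, ha, h1, h2⟩ | ⟨i', j', _, _, _, _, _, h1, h2⟩
  · injection h1 with h; subst h; exact Or.inl h2
  all_goals first
    | (exact V.noConfusion h1)
    | (injection h1 with h; subst h; exact Or.inr ⟨j', hj1, hj2, ha, h2⟩)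

lemma step_x2 {m : ℕ} {v : V} (hE : Edge ℓ a b (V.x2 m) v) : v = V.y2 m := by
  rcases hE with ⟨i', _, _, h1, h2⟩ | ⟨i', _, _, h1, h2⟩ | ⟨i', _, _, h1, h2⟩ |
    ⟨i', _, _, h1, h2⟩ | ⟨i', j', _, _, _, _, h1, h2⟩ |
    ⟨i', j', _, _, _, _, _, h1, h2⟩ | ⟨i', j', _, _, _, _, _, h1, h2⟩ <;>
    first
      | (exact V.noConfusion h1)
      | (injection h1 with h; subst h; exact h2)

lemma step_y1 {i : ℕ} {v : V} (hE : Edge ℓ a b (V.y1 i) v) :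
    ∃ m, 1 ≤ m ∧ m ≤ ℓ ∧ b i m = false ∧ v = V.y2 m := by
  rcases hE with ⟨i', _, _, h1, h2⟩ | ⟨i', _, _, h1, h2⟩ | ⟨i', _, _, h1, h2⟩ |
    ⟨i', _, _, h1, h2⟩ | ⟨i', j', _, _, _, _, h1, h2⟩ |
    ⟨i', j', _, _, _, _, _, h1, h2⟩ | ⟨i', j', _, _, hj1, hj2, hb, h1, h2⟩ <;>
    first
      | (exact V.noConfusion h1)
      | (injection h1 with h; subst h; exact ⟨j', hj1, hj2, hb, h2⟩)

lemma step_y2 {m : ℕ} {v : V} (hE : Edge ℓ a b (V.y2 m) v) : v = V.yy m := by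
  rcases hE with ⟨i', _, _, h1, h2⟩ | ⟨i', _, _, h1, h2⟩ | ⟨i', _, _, h1, h2⟩ |
    ⟨i', _, _, h1, h2⟩ | ⟨i', j', _, _, _, _, h1, h2⟩ |
    ⟨i', j', _, _, _, _, _, h1, h2⟩ | ⟨i', j', _, _, _, _, _, h1, h2⟩ <;>
    first
      | (exact V.noConfusion h1)
      | (injection h1 with h; subst h; exact h2)

lemma step_yy {m : ℕ} {v : V} (hE : Edge ℓ a b (V.yy m) v) : False := by
  rcases hE with ⟨i', _, _, h1, h2⟩ | ⟨i', _, _, h1, h2⟩ | ⟨i', _, _, h1, h2⟩ |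
    ⟨i', _, _, h1, h2⟩ | ⟨i', j', _, _, _, _, h1, h2⟩ |
    ⟨i', j', _, _, _, _, _, h1, h2⟩ | ⟨i', j', _, _, _, _, _, h1, h2⟩ <;>
    exact V.noConfusion h1

lemma no_walk {P : V → V → Prop}
    (hP : ∀ u w, P u w → Edge ℓ a b u w ∧ ¬ InD ℓ u w)
    {i j : ℕ} (ha : a i j = true) (hb : b i j = true) {n : ℕ}
    (w : Walk P (V.xx i) (V.yy j) n) : False := by
  cases w with
  | cons h1 w1 =>
    obtain ⟨hE1, hD1⟩ := hP _ _ h1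
    obtain rfl := step_xx hE1 hD1
    cases w1 with
    | cons h2 w2 =>
      obtain ⟨hE2, _⟩ := hP _ _ h2
      rcases step_x1 hE2 with rfl | ⟨m, _, _, ham, rfl⟩
      · -- via y1 i
        cases w2 with
        | cons h3 w3 =>
          obtain ⟨hE3, _⟩ := hP _ _ h3
          obtain ⟨m, _, _, hbm, rfl⟩ := step_y1 hE3
          cases w3 with
          | cons h4 w4 =>
            obtain ⟨hE4, _⟩ := hP _ _ h4
            obtain rfl := step_y2 hE4
            cases w4 with
            | nil =>
              rw [hbm] at hb; exact Bool.noConfusion hb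
            | cons h5 _ =>
              exact step_yy (hP _ _ h5).1
      · -- via x2 m
        cases w2 with
        | cons h3 w3 =>
          obtain ⟨hE3, _⟩ := hP _ _ h3
          obtain rfl := step_x2 hE3
          cases w3 with
          | cons h4 w4 =>
            obtain ⟨hE4, _⟩ := hP _ _ h4
            obtain rfl := step_y2 hE4
            cases w4 with
            | nil =>
              rw [ham] at ha; exact Bool.noConfusion ha
            | cons h5 _ =>
              exact step_yy (hP _ _ h5).1

end Aux

/-- For every `k ≥ 4`, the weighted directed graph `G_w(ℓ)` has a
`k`-spanner of cost 0 if and only if the strings `a` and `b` are disjoint. -/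
theorem statement6 (ℓ k : ℕ) (hℓ : 1 ≤ ℓ) (hk : 4 ≤ k) (a b : ℕ → ℕ → Bool) :
    (∃ H : Set (V × V), IsSpanner ℓ k a b H ∧ cost ℓ H = 0) ↔
      ¬ ∃ i j, 1 ≤ i ∧ i ≤ ℓ ∧ 1 ≤ j ∧ j ≤ ℓ ∧ a i j = true ∧ b i j = true := by
  constructor
  · rintro ⟨H, ⟨hH1, hH2⟩, hcost⟩ ⟨i, j, hi1, hi2, hj1, hj2, ha, hb⟩
    have hedge : Edge ℓ a b (V.xx i) (V.yy j) :=
      Or.inr (Or.inr (Or.inr (Or.inr (Or.inl ⟨i, j, hi1, hi2, hj1, hj2, rfl, rfl⟩))))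
    obtain ⟨n, _, w⟩ := hH2 _ _ hedge
    refine no_walk (a := a) (b := b) (fun u v huv => ⟨hH1 (u, v) huv, ?_⟩) ha hb w
    intro hD
    have := weight_eq_zero_of_cost_zero hcost huv
    simp only [weight, if_pos hD] at this
    exact one_ne_zero this
  · intro hdisj
    refine ⟨{p | Edge ℓ a b p.1 p.2 ∧ ¬ InD ℓ p.1 p.2}, ⟨fun p hp => hp.1, ?_⟩, ?_⟩
    · intro u w hE
      by_cases hD : InD ℓ u w
      · obtain ⟨i, j, hi1, hi2, hj1, hj2, rfl, rfl⟩ := hD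
        have hab : a i j = false ∨ b i j = false := by
          by_contra h
          push_neg at h
          exact hdisj ⟨i, j, hi1, hi2, hj1, hj2,
            eq_true_of_ne_false fun hf => h.1 hf,
            eq_true_of_ne_false fun hf => h.2 hf⟩
        have h1 : (V.xx i, V.x1 i) ∈ {p : V × V | Edge ℓ a b p.1 p.2 ∧ ¬ InD ℓ p.1 p.2} := by
          refine ⟨Or.inr (Or.inr (Or.inl ⟨i, hi1, hi2, rfl, rfl⟩)), ?_⟩
          rintro ⟨_, _, _, _, _, _, _, h⟩; exact V.noConfusion h
        rcases hab with hab | hab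
        · -- path xx i → x1 i → x2 j → y2 j → yy j
          have h2 : (V.x1 i, V.x2 j) ∈ {p : V × V | Edge ℓ a b p.1 p.2 ∧ ¬ InD ℓ p.1 p.2} := by
            refine ⟨Or.inr (Or.inr (Or.inr (Or.inr (Or.inr (Or.inl
              ⟨i, j, hi1, hi2, hj1, hj2, hab, rfl, rfl⟩))))), ?_⟩
            rintro ⟨_, _, _, _, _, _, h, _⟩; exact V.noConfusion h
          have h3 : (V.x2 j, V.y2 j) ∈ {p : V × V | Edge ℓ a b p.1 p.2 ∧ ¬ InD ℓ p.1 p.2} := by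
            refine ⟨Or.inr (Or.inl ⟨j, hj1, hj2, rfl, rfl⟩), ?_⟩
            rintro ⟨_, _, _, _, _, _, h, _⟩; exact V.noConfusion h
          have h4 : (V.y2 j, V.yy j) ∈ {p : V × V | Edge ℓ a b p.1 p.2 ∧ ¬ InD ℓ p.1 p.2} := by
            refine ⟨Or.inr (Or.inr (Or.inr (Or.inl ⟨j, hj1, hj2, rfl, rfl⟩))), ?_⟩
            rintro ⟨_, _, _, _, _, _, h, _⟩; exact V.noConfusion h
          exact ⟨4, hk, Walk.cons h1 (Walk.cons h2 (Walk.cons h3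
            (Walk.cons h4 (Walk.nil _))))⟩
        · -- path xx i → x1 i → y1 i → y2 j → yy j
          have h2 : (V.x1 i, V.y1 i) ∈ {p : V × V | Edge ℓ a b p.1 p.2 ∧ ¬ InD ℓ p.1 p.2} := by
            refine ⟨Or.inl ⟨i, hi1, hi2, rfl, rfl⟩, ?_⟩
            rintro ⟨_, _, _, _, _, _, h, _⟩; exact V.noConfusion h
          have h3 : (V.y1 i, V.y2 j) ∈ {p : V × V | Edge ℓ a b p.1 p.2 ∧ ¬ InD ℓ p.1 p.2} := by
            refine ⟨Or.inr (Or.inr (Or.inr (Or.inr (Or.inr (Or.inr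
              ⟨i, j, hi1, hi2, hj1, hj2, hab, rfl, rfl⟩))))), ?_⟩
            rintro ⟨_, _, _, _, _, _, h, _⟩; exact V.noConfusion h
          have h4 : (V.y2 j, V.yy j) ∈ {p : V × V | Edge ℓ a b p.1 p.2 ∧ ¬ InD ℓ p.1 p.2} := by
            refine ⟨Or.inr (Or.inr (Or.inr (Or.inl ⟨j, hj1, hj2, rfl, rfl⟩))), ?_⟩
            rintro ⟨_, _, _, _, _, _, h, _⟩; exact V.noConfusion h
          exact ⟨4, hk, Walk.cons h1 (Walk.cons h2 (Walk.cons h3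
            (Walk.cons h4 (Walk.nil _))))⟩
      · exact ⟨1, by omega, Walk.cons ⟨hE, hD⟩ (Walk.nil _)⟩
    · rw [cost]
      have : ∀ p ∈ {p : V × V | Edge ℓ a b p.1 p.2 ∧ ¬ InD ℓ p.1 p.2},
          weight ℓ p.1 p.2 = 0 := fun p hp => weight_of_not_inD hp.2
      rw [finsum_mem_congr rfl this]
      simp

end SpannerW
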